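/- Define ★1 = {*L, *R} and ★n = {★(n-1),...,★1, *L, *R} for n > 1. For positive integers a_1,...,a_n, the sum ★a_1 + ... + ★a_n has outcome P if and only if a_1 ⊕ ... ⊕ a_n = 0, and outcome N otherwise, where ⊕ is bitwise XOR. -/

import Mathlib

/-- Positions of LR-ending partisan games: two terminals and finite option sets
(represented as lists; set-like behavior is captured by the `Iso` relation). -/
inductive Pos : Type
  | termL : Pos
  | termR : Pos
  | opts : List Pos → Pos

namespace Pos

/-- Valid positions: every non-terminal position has a nonempty set of options. -/
inductive Valid : Pos → Prop
  | termL : Valid termL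
  | termR : Valid termR
  | opts : ∀ gs : List Pos, gs ≠ [] → (∀ g ∈ gs, Valid g) → Valid (opts gs)

/-- Disjunctive sum. -/
def sum : Pos → Pos → Pos
  | termL, termL => termL
  | termL, termR => termR
  | termR, termL => termR
  | termR, termR => termL
  | termL, opts hs => opts (hs.attach.map (fun h => sum termL h.1))
  | termR, opts hs => opts (hs.attach.map (fun h => sum termR h.1))
  | opts gs, termL => opts (gs.attach.map (fun g => sum g.1 termL))
  | opts gs, termR => opts (gs.attach.map (fun g => sum g.1 termR))
  | opts gs, opts hs =>
      opts (gs.attach.map (fun g => sum g.1 (opts hs)) ++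
            hs.attach.map (fun h => sum (opts gs) h.1))
termination_by g h => sizeOf g + sizeOf h
decreasing_by
  all_goals
    first
      | (have := List.sizeOf_lt_of_mem h.2; simp_all; omega)
      | (have := List.sizeOf_lt_of_mem g.2; simp_all; omega)

/-- Conjugate: swap the two kinds of terminal positions. -/
def conj : Pos → Pos
  | termL => termR
  | termR => termL
  | opts gs => opts (gs.attach.map (fun g => conj g.1))
decreasing_by
  have := List.sizeOf_lt_of_mem g.2; simp_all; omega

/-- Isomorphism of game trees (positions viewed as sets of options). -/
def Iso : Pos → Pos → Prop
  | termL, termL => True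
  | termR, termR => True
  | opts gs, opts hs =>
      (∀ g ∈ gs.attach, ∃ h ∈ hs.attach, Iso g.1 h.1) ∧
      (∀ h ∈ hs.attach, ∃ g ∈ gs.attach, Iso g.1 h.1)
  | _, _ => False
termination_by g h => sizeOf g + sizeOf h
decreasing_by
  all_goals
    (have hg := List.sizeOf_lt_of_mem g.2; have hh := List.sizeOf_lt_of_mem h.2;
     simp_all; omega)

inductive Player : Type
  | left : Player
  | right : Player
  deriving DecidableEq

/-- `Wins p b G` : player `p` has a winning strategy from position `G`,
where `b = true` means it is `p`'s turn to move and `b = false` means the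
opponent is to move.  A terminal position is won by the player given by
its label, regardless of whose turn it is. -/
inductive Wins : Player → Bool → Pos → Prop
  | termL : ∀ b, Wins Player.left b termL
  | termR : ∀ b, Wins Player.right b termR
  | move : ∀ (p : Player) (gs : List Pos) (g : Pos), g ∈ gs →
      Wins p false g → Wins p true (opts gs)
  | wait : ∀ (p : Player) (gs : List Pos),
      (∀ g, g ∈ gs → Wins p true g) → Wins p false (opts gs)

inductive Outcome : Type
  | L : Outcome
  | R : Outcome
  | N : Outcome
  | P : Outcome
  deriving DecidableEq

/-- The outcome of a position. -/
noncomputable def outcome (G : Pos) : Outcome := by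
  classical
  exact
    if Wins Player.left true G then
      if Wins Player.left false G then Outcome.L else Outcome.N
    else
      if Wins Player.left false G then Outcome.P else Outcome.R

/-- Equivalence of positions: the outcome agrees in every (valid) context. -/
def equiv (G H : Pos) : Prop :=
  ∀ X : Pos, Valid X → outcome (sum G X) = outcome (sum H X)

end Pos
namespace Pos

mutual
/-- `Ln n` is the position `*L_n`: `*L_0 = *L`, `*L_n = {*L_{n-1}, ..., *L_0}`. -/
def Ln : ℕ → Pos
  | 0 => termL
  | n + 1 => opts (LnList (n + 1))
termination_by n => 2 * n + 1
/-- `LnList n = [*L_{n-1}, ..., *L_0]`. -/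
def LnList : ℕ → List Pos
  | 0 => []
  | n + 1 => Ln n :: LnList n
termination_by n => 2 * n
end

mutual
/-- `Rn n` is the position `*R_n`. -/
def Rn : ℕ → Pos
  | 0 => termR
  | n + 1 => opts (RnList (n + 1))
termination_by n => 2 * n + 1
def RnList : ℕ → List Pos
  | 0 => []
  | n + 1 => Rn n :: RnList n
termination_by n => 2 * n
end

/-- `kome n` is `✠_n = {*L_{n-1}, *R_{n-1}, ..., *L_0, *R_0}` (for `n ≥ 1`). -/
def kome (n : ℕ) : Pos := opts (LnList n ++ RnList n)

mutual
/-- `starAux n` represents `★(n+1)`: `★1 = {*L, *R}`, `★n = {★(n-1),...,★1,*L,*R}`. -/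
def starAux : ℕ → Pos
  | 0 => opts [termL, termR]
  | n + 1 => opts (starList (n + 1) ++ [termL, termR])
termination_by n => 2 * n + 1
/-- `starList n = [★n, ..., ★1]`. -/
def starList : ℕ → List Pos
  | 0 => []
  | n + 1 => starAux n :: starList n
termination_by n => 2 * n
end

/-- `bigstar n` is `★n` (meaningful for `n ≥ 1`). -/
def bigstar (n : ℕ) : Pos := starAux (n - 1)

/-- Sum of a list of positions (`*L` is the empty sum, and `G + *L = G`). -/
def sumList (l : List Pos) : Pos := l.foldr sum termL

/-- Nim-sum (XOR) of a list of naturals. -/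
def xorList (l : List ℕ) : ℕ := l.foldr (· ^^^ ·) 0

/-- Minimum excludant of a list of naturals. -/
noncomputable def mexList (l : List ℕ) : ℕ := sInf {n : ℕ | n ∉ l}

end Pos

namespace Pos

theorem sum_termL_left (X : Pos) : sum termL X = X := by
  match X with
  | termL => simp [sum]
  | termR => simp [sum]
  | opts hs =>
    rw [sum]
    congr 1
    rw [List.map_congr_left (g := fun h => h.1)
      (fun h _ => sum_termL_left h.1)]
    simp
termination_by sizeOf X
decreasing_by have := List.sizeOf_lt_of_mem h.2; simp_all; omega

theorem sum_termL_right (X : Pos) : sum X termL = X := by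
  match X with
  | termL => simp [sum]
  | termR => simp [sum]
  | opts gs =>
    rw [sum]
    congr 1
    rw [List.map_congr_left (g := fun g => g.1)
      (fun g _ => sum_termL_right g.1)]
    simp
termination_by sizeOf X
decreasing_by have := List.sizeOf_lt_of_mem g.2; simp_all; omega

theorem conj_opts (gs : List Pos) : conj (opts gs) = opts (gs.map conj) := by
  rw [conj]
  congr 1
  simp [List.attach_map_val]

theorem sum_termR_left (X : Pos) : sum termR X = conj X := by
  match X with
  | termL => simp [sum, conj]
  | termR => simp [sum, conj]
  | opts hs =>
    rw [sum, conj_opts]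
    congr 1
    rw [List.map_congr_left (g := fun h => conj h.1)
      (fun h _ => sum_termR_left h.1)]
    simp [List.attach_map_val]
termination_by sizeOf X
decreasing_by have := List.sizeOf_lt_of_mem h.2; simp_all; omega

theorem sum_termR_right (X : Pos) : sum X termR = conj X := by
  match X with
  | termL => simp [sum, conj]
  | termR => simp [sum, conj]
  | opts gs =>
    rw [sum, conj_opts]
    congr 1
    rw [List.map_congr_left (g := fun g => conj g.1)
      (fun g _ => sum_termR_right g.1)]
    simp [List.attach_map_val]
termination_by sizeOf X
decreasing_by have := List.sizeOf_lt_of_mem g.2; simp_all; omega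

end Pos
namespace Pos

/-- move-spec representation predicate -/
def Rep : Pos → List ℕ → Prop
  | termL, _ => False
  | termR, _ => False
  | opts gs, as =>
      as ≠ [] ∧ (∀ a ∈ as, 1 ≤ a) ∧
      (∀ g ∈ gs.attach,
          (∃ i b, ∃ h : i < as.length, 1 ≤ b ∧ b < as.get ⟨i, h⟩ ∧ Rep g.1 (as.set i b)) ∨
          (∃ i, i < as.length ∧ as.eraseIdx i ≠ [] ∧ Rep g.1 (as.eraseIdx i)) ∨
          (as.length = 1 ∧ (g.1 = termL ∨ g.1 = termR))) ∧
      (∀ i b, ∀ h : i < as.length, 1 ≤ b → b < as.get ⟨i, h⟩ →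
          ∃ g ∈ gs.attach, Rep g.1 (as.set i b)) ∧
      (∀ i, i < as.length → as.eraseIdx i ≠ [] →
          ∃ g ∈ gs.attach, Rep g.1 (as.eraseIdx i)) ∧
      (as.length = 1 → termL ∈ gs ∧ termR ∈ gs)
termination_by g _ => sizeOf g
decreasing_by all_goals (have := List.sizeOf_lt_of_mem g.2; simp_all; omega)

theorem rep_opts_iff (gs : List Pos) (as : List ℕ) :
    Rep (opts gs) as ↔
      (as ≠ [] ∧ (∀ a ∈ as, 1 ≤ a) ∧
      (∀ g ∈ gs,
          (∃ i b, ∃ h : i < as.length, 1 ≤ b ∧ b < as.get ⟨i, h⟩ ∧ Rep g (as.set i b)) ∨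
          (∃ i, i < as.length ∧ as.eraseIdx i ≠ [] ∧ Rep g (as.eraseIdx i)) ∨
          (as.length = 1 ∧ (g = termL ∨ g = termR))) ∧
      (∀ i b, ∀ h : i < as.length, 1 ≤ b → b < as.get ⟨i, h⟩ →
          ∃ g ∈ gs, Rep g (as.set i b)) ∧
      (∀ i, i < as.length → as.eraseIdx i ≠ [] →
          ∃ g ∈ gs, Rep g (as.eraseIdx i)) ∧
      (as.length = 1 → termL ∈ gs ∧ termR ∈ gs)) := by
  rw [Rep]
  constructor
  · rintro ⟨h1, h2, h3, h4, h5, h6⟩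
    refine ⟨h1, h2, fun g hg => h3 ⟨g, hg⟩ (List.mem_attach _ _), ?_, ?_, h6⟩
    · intro i b h hb1 hb2
      obtain ⟨g, _, hgr⟩ := h4 i b h hb1 hb2
      exact ⟨g.1, g.2, hgr⟩
    · intro i hi hne
      obtain ⟨g, _, hgr⟩ := h5 i hi hne
      exact ⟨g.1, g.2, hgr⟩
  · rintro ⟨h1, h2, h3, h4, h5, h6⟩
    refine ⟨h1, h2, fun g _ => h3 g.1 g.2, ?_, ?_, h6⟩
    · intro i b h hb1 hb2
      obtain ⟨g, hg, hgr⟩ := h4 i b h hb1 hb2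
      exact ⟨⟨g, hg⟩, List.mem_attach _ _, hgr⟩
    · intro i hi hne
      obtain ⟨g, hg, hgr⟩ := h5 i hi hne
      exact ⟨⟨g, hg⟩, List.mem_attach _ _, hgr⟩

theorem rep_ne (as : List ℕ) : ¬ Rep termL as ∧ ¬ Rep termR as := by
  constructor <;> (rw [Rep]; exact id)

theorem rep_conj (G : Pos) (as : List ℕ) (h : Rep G as) : Rep (conj G) as := by
  match G with
  | termL => rw [Rep] at h; exact h.elim
  | termR => rw [Rep] at h; exact h.elim
  | opts gs =>
    rw [conj_opts, rep_opts_iff]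
    rw [rep_opts_iff] at h
    obtain ⟨h1, h2, h3, h4, h5, h6⟩ := h
    refine ⟨h1, h2, ?_, ?_, ?_, ?_⟩
    · intro g' hg'
      obtain ⟨g, hg, rfl⟩ := List.mem_map.1 hg'
      rcases h3 g hg with ⟨i, b, hh, hb1, hb2, hr⟩ | ⟨i, hi, hne, hr⟩ | ⟨hl, hg2⟩
      · exact Or.inl ⟨i, b, hh, hb1, hb2, rep_conj g _ hr⟩
      · exact Or.inr (Or.inl ⟨i, hi, hne, rep_conj g _ hr⟩)
      · refine Or.inr (Or.inr ⟨hl, ?_⟩)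
        rcases hg2 with rfl | rfl
        · exact Or.inr (by simp [conj])
        · exact Or.inl (by simp [conj])
    · intro i b hh hb1 hb2
      obtain ⟨g, hg, hr⟩ := h4 i b hh hb1 hb2
      exact ⟨conj g, List.mem_map_of_mem hg, rep_conj g _ hr⟩
    · intro i hi hne
      obtain ⟨g, hg, hr⟩ := h5 i hi hne
      exact ⟨conj g, List.mem_map_of_mem hg, rep_conj g _ hr⟩
    · intro hl
      obtain ⟨hL, hR⟩ := h6 hl
      constructor
      · have : conj termR = termL := by simp [conj]
        exact this ▸ List.mem_map_of_mem (f := conj) hR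
      · have : conj termL = termR := by simp [conj]
        exact this ▸ List.mem_map_of_mem (f := conj) hL
termination_by sizeOf G
decreasing_by all_goals (have := List.sizeOf_lt_of_mem hg; simp_all; omega)

end Pos
namespace Pos

theorem wins_termL_inv {q : Player} {c : Bool} (h : Wins q c termL) : q = Player.left := by
  cases h; rfl

theorem wins_termR_inv {q : Player} {c : Bool} (h : Wins q c termR) : q = Player.right := by
  cases h; rfl

theorem wins_not_both {p q : Player} {b : Bool} {G : Pos}
    (h : Wins p b G) (hpq : p ≠ q) (h' : Wins q (!b) G) : False := by
  induction h with
  | termL b => exact hpq (wins_termL_inv h').symm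
  | termR b => exact hpq (wins_termR_inv h').symm
  | move p gs g hg hw ih =>
    cases h' with
    | wait _ _ hall => exact ih hpq (hall g hg)
  | wait p gs hall ih =>
    cases h' with
    | move _ _ g hg hw => exact ih g hg hpq hw

theorem xor_left_comm (a b c : ℕ) : a ^^^ (b ^^^ c) = b ^^^ (a ^^^ c) := by
  rw [← Nat.xor_assoc, Nat.xor_comm a b, Nat.xor_assoc]

theorem xorList_cons (a : ℕ) (l : List ℕ) : xorList (a :: l) = a ^^^ xorList l := rfl

theorem xorList_set (l : List ℕ) (i b : ℕ) (h : i < l.length) :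
    xorList (l.set i b) = (xorList l ^^^ l.get ⟨i, h⟩) ^^^ b := by
  induction l generalizing i with
  | nil => simp at h
  | cons a t ih =>
    cases i with
    | zero =>
      simp only [List.set, xorList_cons, List.get]
      simp [Nat.xor_assoc, Nat.xor_comm, xor_left_comm, xor_cancel_left]
    | succ j =>
      simp only [List.set, xorList_cons, List.get]
      rw [ih j (by simpa using h)]
      simp [Nat.xor_assoc, Nat.xor_comm, xor_left_comm, xor_cancel_left]

theorem xorList_eraseIdx (l : List ℕ) (i : ℕ) (h : i < l.length) :
    xorList (l.eraseIdx i) = xorList l ^^^ l.get ⟨i, h⟩ := by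
  induction l generalizing i with
  | nil => simp at h
  | cons a t ih =>
    cases i with
    | zero =>
      simp only [List.eraseIdx, xorList_cons, List.get]
      simp [Nat.xor_assoc, Nat.xor_comm, xor_left_comm, xor_cancel_left]
    | succ j =>
      simp only [List.eraseIdx, xorList_cons, List.get]
      rw [ih j (by simpa using h)]
      simp [Nat.xor_assoc, Nat.xor_comm, xor_left_comm, xor_cancel_left]

theorem exists_bit_mem (l : List ℕ) (k : ℕ) (h : (xorList l).testBit k = true) :
    ∃ i : ℕ, ∃ hi : i < l.length, (l.get ⟨i, hi⟩).testBit k = true := by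
  induction l with
  | nil => simp [xorList] at h
  | cons a t ih =>
    rw [xorList_cons, Nat.testBit_xor] at h
    by_cases ha : a.testBit k = true
    · exact ⟨0, by simp, ha⟩
    · simp only [Bool.not_eq_true] at ha
      rw [ha] at h
      simp only [Bool.false_bne] at h
      obtain ⟨i, hi, hb⟩ := ih h
      exact ⟨i + 1, by simpa using hi, hb⟩

theorem exists_good_move (l : List ℕ) (hx : xorList l ≠ 0) :
    ∃ i : ℕ, ∃ hi : i < l.length, (l.get ⟨i, hi⟩) ^^^ xorList l < l.get ⟨i, hi⟩ := by
  obtain ⟨k, hk, hk'⟩ := Nat.exists_most_significant_bit hx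
  obtain ⟨i, hi, hb⟩ := exists_bit_mem l k hk
  refine ⟨i, hi, ?_⟩
  refine Nat.lt_of_testBit k ?_ hb ?_
  · rw [Nat.testBit_xor, hb, hk]; rfl
  · intro j hj
    rw [Nat.testBit_xor, hk' j hj]
    simp

end Pos
namespace Pos

theorem xor_cancel2 (s a : ℕ) : (s ^^^ a) ^^^ (a ^^^ s) = 0 := by
  rw [Nat.xor_comm a s, Nat.xor_self]

set_option maxHeartbeats 1000000 in
theorem rep_wins (G : Pos) (as : List ℕ) (h : Rep G as) :
    (xorList as ≠ 0 → ∀ p, Wins p true G) ∧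
    (xorList as = 0 → ∀ p, Wins p false G) := by
  match G with
  | termL => rw [Rep] at h; exact h.elim
  | termR => rw [Rep] at h; exact h.elim
  | opts gs =>
    rw [rep_opts_iff] at h
    obtain ⟨hne, hpos, hmv, hdec, hrem, hterm⟩ := h
    constructor
    · intro hx p
      obtain ⟨i, hi, hlt⟩ := exists_good_move as hx
      by_cases hb0 : as.get ⟨i, hi⟩ ^^^ xorList as = 0
      · have haz : as.get ⟨i, hi⟩ = xorList as := by rwa [xor_eq_zero_iff] at hb0
        by_cases hl1 : as.length = 1
        · obtain ⟨hL, hR⟩ := hterm hl1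
          cases p with
          | left => exact Wins.move _ _ termL hL (Wins.termL false)
          | right => exact Wins.move _ _ termR hR (Wins.termR false)
        · have hne' : as.eraseIdx i ≠ [] := by
            have h2 := List.length_eraseIdx_of_lt hi
            intro hnil
            rw [hnil] at h2
            simp at h2
            omega
          obtain ⟨g, hg, hrep⟩ := hrem i hi hne'
          have hx0 : xorList (as.eraseIdx i) = 0 := by
            rw [xorList_eraseIdx as i hi, ← haz, Nat.xor_self]
          exact Wins.move _ _ g hg ((rep_wins g _ hrep).2 hx0 p)
      · have hb1 : 1 ≤ as.get ⟨i, hi⟩ ^^^ xorList as := Nat.one_le_iff_ne_zero.2 hb0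
        obtain ⟨g, hg, hrep⟩ := hdec i (as.get ⟨i, hi⟩ ^^^ xorList as) hi hb1 hlt
        have hx0 : xorList (as.set i (as.get ⟨i, hi⟩ ^^^ xorList as)) = 0 := by
          rw [xorList_set as i _ hi]
          exact xor_cancel2 _ _
        exact Wins.move _ _ g hg ((rep_wins g _ hrep).2 hx0 p)
    · intro hx p
      apply Wins.wait
      intro g hg
      rcases hmv g hg with ⟨i, b, hi, hb1, hb2, hrep⟩ | ⟨i, hi, hne', hrep⟩ | ⟨hl1, hg2⟩
      · have hx' : xorList (as.set i b) ≠ 0 := by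
          rw [xorList_set as i b hi, hx, Nat.zero_xor, ne_eq, xor_eq_zero_iff]
          omega
        exact (rep_wins g _ hrep).1 hx' p
      · have hx' : xorList (as.eraseIdx i) ≠ 0 := by
          rw [xorList_eraseIdx as i hi, hx, Nat.zero_xor]
          have := hpos _ (as.get_mem ⟨i, hi⟩)
          omega
        exact (rep_wins g _ hrep).1 hx' p
      · exfalso
        obtain ⟨a0, rfl⟩ := List.length_eq_one_iff.1 hl1
        have h0 : a0 = 0 := by
          have : a0 ^^^ 0 = 0 := hx
          simpa using this
        have := hpos a0 (by simp)
        omega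
termination_by sizeOf G
decreasing_by all_goals (have := List.sizeOf_lt_of_mem hg; simp_all; omega)

end Pos
namespace Pos

theorem starAux_eq (n : ℕ) : starAux n = opts (starList n ++ [termL, termR]) := by
  cases n with
  | zero => rw [starAux, starList]; rfl
  | succ m => rw [starAux]

theorem mem_starList {g : Pos} {n : ℕ} : g ∈ starList n ↔ ∃ k, k < n ∧ g = starAux k := by
  induction n with
  | zero => rw [starList]; simp
  | succ m ih =>
    rw [starList]
    simp only [List.mem_cons, ih]
    constructor
    · rintro (rfl | ⟨k, hk, rfl⟩)
      · exact ⟨m, by omega, rfl⟩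
      · exact ⟨k, by omega, rfl⟩
    · rintro ⟨k, hk, rfl⟩
      by_cases hkm : k = m
      · subst hkm; exact Or.inl rfl
      · exact Or.inr ⟨k, by omega, rfl⟩

theorem bigstar_eq (a : ℕ) :
    bigstar a = opts (starList (a - 1) ++ [termL, termR]) := by
  rw [bigstar, starAux_eq]

end Pos
namespace Pos

set_option maxHeartbeats 2000000 in
theorem rep_sum_star (a : ℕ) (ha : 1 ≤ a) (X : Pos) (as : List ℕ)
    (hX : (X = termL ∧ as = []) ∨ (Rep X as ∧ as ≠ [])) :
    Rep (sum (bigstar a) X) (a :: as) := by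
  rcases hX with ⟨rfl, rfl⟩ | ⟨hrepX, hneas⟩
  · rw [sum_termL_right, bigstar_eq, rep_opts_iff]
    refine ⟨by simp, by simpa using ha, ?_, ?_, ?_, ?_⟩
    · intro g hg
      rcases List.mem_append.1 hg with h1 | h2
      · obtain ⟨k, hk, rfl⟩ := mem_starList.1 h1
        refine Or.inl ⟨0, k + 1, by simp, by omega, by simpa using (by omega : k + 1 < a), ?_⟩
        have hr := rep_sum_star (k + 1) (by omega) termL [] (Or.inl ⟨rfl, rfl⟩)
        rw [sum_termL_right, bigstar_eq] at hr
        rw [starAux_eq]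
        simpa using hr
      · exact Or.inr (Or.inr ⟨rfl, by simpa using h2⟩)
    · intro i b hi hb1 hb2
      have hi0 : i = 0 := by simp at hi; omega
      subst hi0
      have hba : b < a := by simpa using hb2
      refine ⟨starAux (b - 1), List.mem_append_left _ (mem_starList.2 ⟨b - 1, by omega, rfl⟩), ?_⟩
      have hr := rep_sum_star b hb1 termL [] (Or.inl ⟨rfl, rfl⟩)
      rw [sum_termL_right, bigstar_eq] at hr
      rw [starAux_eq]
      have : b - 1 + 1 = b := by omega
      rw [this] at *
      simpa using hr
    · intro i hi hne2
      have hi0 : i = 0 := by simp at hi; omega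
      subst hi0
      simp at hne2
    · intro _
      exact ⟨List.mem_append_right _ (by simp), List.mem_append_right _ (by simp)⟩
  · obtain ⟨hs, hXeq⟩ : ∃ hs, X = opts hs := by
      cases X with
      | termL => rw [Rep] at hrepX; exact hrepX.elim
      | termR => rw [Rep] at hrepX; exact hrepX.elim
      | opts hs => exact ⟨hs, rfl⟩
    rw [hXeq] at hrepX
    rw [hXeq]
    obtain ⟨-, hposas, hmv, hdec, hrem, hterm⟩ := (rep_opts_iff hs as).1 hrepX
    rw [bigstar_eq, sum, rep_opts_iff]
    refine ⟨by simp, ?_, ?_, ?_, ?_, ?_⟩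
    · intro x hx
      rcases List.mem_cons.1 hx with rfl | hx'
      · exact ha
      · exact hposas x hx'
    · -- forward move analysis
      intro g' hg'
      rcases List.mem_append.1 hg' with hL | hR
      · obtain ⟨⟨g, hg⟩, -, rfl⟩ := List.mem_map.1 hL
        rcases List.mem_append.1 hg with h1 | h2
        · obtain ⟨k, hk, rfl⟩ := mem_starList.1 h1
          refine Or.inl ⟨0, k + 1, by simp, by omega,
            by simpa using (by omega : k + 1 < a), ?_⟩
          have hr := rep_sum_star (k + 1) (by omega) (opts hs) as (Or.inr ⟨hrepX, hneas⟩)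
          rw [bigstar_eq] at hr
          simp only [Nat.add_sub_cancel] at hr
          show Rep (sum (starAux k) (opts hs)) ((k + 1) :: as)
          rw [starAux_eq]
          exact hr
        · rcases (by simpa using h2 : g = termL ∨ g = termR) with rfl | rfl
          · refine Or.inr (Or.inl ⟨0, by simp, by simpa using hneas, ?_⟩)
            rw [sum_termL_left]
            simpa using hrepX
          · refine Or.inr (Or.inl ⟨0, by simp, by simpa using hneas, ?_⟩)
            rw [sum_termR_left]
            simpa using rep_conj _ _ hrepX
      · obtain ⟨⟨h, hh⟩, -, rfl⟩ := List.mem_map.1 hR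
        rcases hmv h hh with ⟨j, b, hj, hb1, hb2, hrep⟩ | ⟨j, hj, hne2, hrep⟩ | ⟨hl1, hcase⟩
        · refine Or.inl ⟨j + 1, b, by simp; omega, hb1, by simpa using hb2, ?_⟩
          have hset : as.set j b ≠ [] :=
            List.ne_nil_of_length_pos (by rw [List.length_set]; omega)
          have hr := rep_sum_star a ha h (as.set j b) (Or.inr ⟨hrep, hset⟩)
          rw [bigstar_eq] at hr
          simpa using hr
        · refine Or.inr (Or.inl ⟨j + 1, by simp; omega, by simp, ?_⟩)
          have hr := rep_sum_star a ha h (as.eraseIdx j) (Or.inr ⟨hrep, hne2⟩)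
          rw [bigstar_eq] at hr
          simpa using hr
        · obtain ⟨x, rfl⟩ := List.length_eq_one_iff.1 hl1
          refine Or.inr (Or.inl ⟨1, by simp, by simp, ?_⟩)
          rcases hcase with rfl | rfl
          · have hr := rep_sum_star a ha termL [] (Or.inl ⟨rfl, rfl⟩)
            rw [bigstar_eq] at hr
            simpa using hr
          · rw [sum_termR_right]
            have hr := rep_sum_star a ha termL [] (Or.inl ⟨rfl, rfl⟩)
            rw [sum_termL_right, bigstar_eq] at hr
            simpa using rep_conj _ _ hr
    · -- decrease realization
      intro i b hi hb1 hb2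
      cases i with
      | zero =>
        have hba : b < a := by simpa using hb2
        refine ⟨sum (starAux (b - 1)) (opts hs), ?_, ?_⟩
        · exact List.mem_append_left _ (List.mem_map.2
            ⟨⟨starAux (b - 1), List.mem_append_left _ (mem_starList.2 ⟨b - 1, by omega, rfl⟩)⟩,
             List.mem_attach _ _, rfl⟩)
        · have hr := rep_sum_star b hb1 (opts hs) as (Or.inr ⟨hrepX, hneas⟩)
          rw [bigstar_eq] at hr
          rw [starAux_eq]
          simpa using hr
      | succ j =>
        have hj : j < as.length := by simpa using hi
        obtain ⟨h, hh, hrep⟩ := hdec j b hj hb1 (by simpa using hb2)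
        refine ⟨sum (opts (starList (a - 1) ++ [termL, termR])) h,
          List.mem_append_right _ (List.mem_map.2 ⟨⟨h, hh⟩, List.mem_attach _ _, rfl⟩), ?_⟩
        have hset : as.set j b ≠ [] :=
          List.ne_nil_of_length_pos (by rw [List.length_set]; omega)
        have hr := rep_sum_star a ha h (as.set j b) (Or.inr ⟨hrep, hset⟩)
        rw [bigstar_eq] at hr
        simpa using hr
    · -- removal realization
      intro i hi hne2
      cases i with
      | zero =>
        refine ⟨sum termL (opts hs), ?_, ?_⟩
        · exact List.mem_append_left _ (List.mem_map.2
            ⟨⟨termL, List.mem_append_right _ (by simp)⟩, List.mem_attach _ _, rfl⟩)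
        · rw [sum_termL_left]
          simpa using hrepX
      | succ j =>
        have hj : j < as.length := by simpa using hi
        by_cases hjz : as.eraseIdx j = []
        · have hlen1 : as.length = 1 := by
            have := List.length_eraseIdx_of_lt hj
            rw [hjz] at this
            simp at this
            omega
          obtain ⟨hLmem, -⟩ := hterm hlen1
          refine ⟨sum (opts (starList (a - 1) ++ [termL, termR])) termL,
            List.mem_append_right _ (List.mem_map.2 ⟨⟨termL, hLmem⟩, List.mem_attach _ _, rfl⟩),
            ?_⟩
          have hr := rep_sum_star a ha termL [] (Or.inl ⟨rfl, rfl⟩)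
          rw [bigstar_eq] at hr
          simp [hjz]
          simpa using hr
        · obtain ⟨h, hh, hrep⟩ := hrem j hj hjz
          refine ⟨sum (opts (starList (a - 1) ++ [termL, termR])) h,
            List.mem_append_right _ (List.mem_map.2 ⟨⟨h, hh⟩, List.mem_attach _ _, rfl⟩), ?_⟩
          have hr := rep_sum_star a ha h (as.eraseIdx j) (Or.inr ⟨hrep, hjz⟩)
          rw [bigstar_eq] at hr
          simpa using hr
    · intro hlen
      exfalso
      simp at hlen
      exact hneas hlen
termination_by a + sizeOf X
decreasing_by
  all_goals simp_wf
  all_goals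
    first
      | (have hEq : X = termL := by assumption
         rw [hEq]
         simp
         omega)
      | (have hEq : X = opts hs := by assumption
         rw [hEq]
         try simp
         first
           | omega
           | (have := List.sizeOf_lt_of_mem hh; omega)
           | (cases hs <;> simp +arith +decide))

end Pos
namespace Pos

theorem rep_sumList (as : List ℕ) (h : as ≠ []) (hpos : ∀ a ∈ as, 1 ≤ a) :
    Rep (sumList (as.map bigstar)) as := by
  induction as with
  | nil => exact absurd rfl h
  | cons a rest ih =>
    have ha : 1 ≤ a := hpos a (by simp)
    have heq : sumList ((a :: rest).map bigstar)
        = sum (bigstar a) (sumList (rest.map bigstar)) := rfl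
    rw [heq]
    cases rest with
    | nil => exact rep_sum_star a ha termL [] (Or.inl ⟨rfl, rfl⟩)
    | cons b rest' =>
      exact rep_sum_star a ha _ _
        (Or.inr ⟨ih (by simp) (fun x hx => hpos x (List.mem_cons_of_mem a hx)), by simp⟩)

end Pos

/-- `★a_1 + ⋯ + ★a_n` has outcome P iff `a_1 ⊕ ⋯ ⊕ a_n = 0`,
and outcome N otherwise. -/
theorem bigstar_sum_outcome (as : List ℕ) (h : as ≠ []) (hpos : ∀ a ∈ as, 1 ≤ a) :
    (Pos.xorList as = 0 →
      Pos.outcome (Pos.sumList (as.map Pos.bigstar)) = Pos.Outcome.P) ∧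
    (Pos.xorList as ≠ 0 →
      Pos.outcome (Pos.sumList (as.map Pos.bigstar)) = Pos.Outcome.N) := by
  have hrep := Pos.rep_sumList as h hpos
  have hw := Pos.rep_wins _ _ hrep
  have hlr : Pos.Player.left ≠ Pos.Player.right := by decide
  constructor
  · intro hx0
    have hL : Pos.Wins Pos.Player.left false _ := hw.2 hx0 Pos.Player.left
    have hR : Pos.Wins Pos.Player.right false _ := hw.2 hx0 Pos.Player.right
    have hnt : ¬ Pos.Wins Pos.Player.left true (Pos.sumList (as.map Pos.bigstar)) := by
      intro hcon
      exact Pos.wins_not_both hcon hlr hR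
    rw [Pos.outcome, if_neg hnt, if_pos hL]
  · intro hx
    have hLt : Pos.Wins Pos.Player.left true _ := hw.1 hx Pos.Player.left
    have hRt : Pos.Wins Pos.Player.right true _ := hw.1 hx Pos.Player.right
    have hnf : ¬ Pos.Wins Pos.Player.left false (Pos.sumList (as.map Pos.bigstar)) := by
      intro hcon
      have : Pos.Wins Pos.Player.right (!false) _ := hRt
      exact Pos.wins_not_both hcon hlr this
    rw [Pos.outcome, if_pos hLt, if_neg hnf]
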